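/- arXiv:math/0412097 — 7 statements merged into one kernel-verified Lean document; each statement's English description precedes it below -/
import Mathlib

section
/- Let ω be a 2-form on a smooth manifold M and a : TM → TM a (1,1)-tensor commuting with ω (i.e. ω(aX,Y) = ω(X,aY) for all vector fields X, Y). Then for all vector fields X, Y: i_{N_a(X,Y)}(ω) = i_{aX∧Y + X∧aY}(dω_a) − i_{aX∧aY}(dω) − i_{X∧Y}(d(a*ω)), where N_a(X,Y) = [aX,aY] + a²[X,Y] − a([aX,Y] + [X,aY]) is the Nijenhuis torsion, ω_a(X,Y) = ω(aX,Y), (a*ω)(X,Y) = ω(aX,aY), and i_{X∧Y}(θ) denotes the 1-form Z ↦ θ(X,Y,Z). -/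
noncomputable section

open Derivation

variable (A : Type*) [CommRing A] [Algebra ℝ A]

/-- Vector fields on the "manifold" with function algebra `A`. -/
abbrev VecF := Derivation ℝ A A

/-- One-forms: `A`-linear functionals on vector fields. -/
abbrev OneForm := VecF A →ₗ[A] A

variable {A}

/-- The differential of a function, as a one-form. -/
def dFun (f : A) : OneForm A where
  toFun X := X f
  map_add' X Y := rfl
  map_smul' a X := rfl

/-- The Lie derivative of a one-form along a vector field (as a one-form). -/
def lieOneForm (X : VecF A) (ξ : OneForm A) : OneForm A where
  toFun Y := X (ξ Y) - ξ ⁅X, Y⁆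
  map_add' Y Z := by simp [map_add]; ring
  map_smul' f Y := by
    have hb : ⁅X, f • Y⁆ = f • ⁅X, Y⁆ + (X f) • Y := by
      ext g
      simp [Derivation.commutator_apply, Derivation.leibniz, smul_eq_mul]
    simp [hb, Derivation.leibniz, smul_eq_mul]
    ring

/-- The exterior derivative of a 2-form (given as a bilinear expression on
vector fields), defined by the Koszul-type formula. -/
def dTwo (σ : VecF A → VecF A → A) : VecF A → VecF A → VecF A → A :=
  fun X Y Z =>
    X (σ Y Z) - Y (σ X Z) + Z (σ X Y)
      - σ ⁅X, Y⁆ Z + σ ⁅X, Z⁆ Y - σ ⁅Y, Z⁆ X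

/-- The Nijenhuis torsion of a `(1,1)`-tensor. -/
def nijenhuis (a : VecF A →ₗ[A] VecF A) (X Y : VecF A) : VecF A :=
  ⁅a X, a Y⁆ + a (a ⁅X, Y⁆) - a ⁅a X, Y⁆ - a ⁅X, a Y⁆

/-- The canonical pairing on `TM ⊕ T*M`. -/
def cPair (α β : VecF A × OneForm A) : A := α.2 β.1 + β.2 α.1

/-- The Courant bracket on sections of `TM ⊕ T*M`. -/
def courant (α β : VecF A × OneForm A) : VecF A × OneForm A :=
  (⁅α.1, β.1⁆,
    lieOneForm α.1 β.2 - lieOneForm β.1 α.2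
      - algebraMap ℝ A (1/2) • dFun (β.2 α.1 - α.2 β.1))

/-- for a 2-form `ω` and a `(1,1)`-tensor `a` commuting with `ω`,
`i_{N_a(X,Y)}ω = i_{aX∧Y + X∧aY}(dω_a) − i_{aX∧aY}(dω) − i_{X∧Y}(d(a*ω))`. -/
theorem nijenhuis_contraction_formula
    (ω : VecF A →ₗ[A] VecF A →ₗ[A] A) (hskew : ∀ X Y, ω X Y = - ω Y X)
    (a : VecF A →ₗ[A] VecF A) (hcomm : ∀ X Y, ω (a X) Y = ω X (a Y))
    (X Y Z : VecF A) :
    ω (nijenhuis a X Y) Z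
      = (dTwo (fun U V => ω (a U) V) (a X) Y Z
          + dTwo (fun U V => ω (a U) V) X (a Y) Z)
        - dTwo (fun U V => ω U V) (a X) (a Y) Z
        - dTwo (fun U V => ω (a U) (a V)) X Y Z := by
  simp only [nijenhuis, dTwo, map_add, map_sub, LinearMap.add_apply, LinearMap.sub_apply, hcomm]
  ring
end
end

section
/- Let (M, ω) be a symplectic manifold and a : TM → TM a (1,1)-tensor commuting with ω such that the 2-form ω_a(X,Y) = ω(aX,Y) is closed (a Hitchin pair). Then the twist σ := −(ω + a*ω) satisfies, for all vector fields X, Y: i_{X∧Y}(dσ) = i_{N_a(X,Y)}(ω); consequently N_a(X,Y) = ω♯⁻¹ i_{X∧Y}(dσ), i.e. N_a(X,Y) = π♯ i_{X∧Y}(dσ) where π is the Poisson bivector inverse to ω. -/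
noncomputable section

open Derivation

variable (A : Type*) [CommRing A] [Algebra ℝ A]

variable {A}

/-- The twist of a pair `(ω, a)`: the 2-form `σ = −(ω + a*ω)`. -/
def twist (ω : VecF A →ₗ[A] VecF A →ₗ[A] A) (a : VecF A →ₗ[A] VecF A) :
    VecF A → VecF A → A :=
  fun U V => -(ω U V + ω (a U) (a V))

/-- for a Hitchin pair `(ω, a)` with twist `σ = −(ω + a*ω)`,
`i_{X∧Y}(dσ) = i_{N_a(X,Y)}ω`, and hence `N_a(X,Y) = π♯ i_{X∧Y}(dσ)` where
`π♯` is the inverse of `ω♯`. -/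
theorem twist_dTwo_eq_nijenhuis
    (ω : VecF A →ₗ[A] VecF A →ₗ[A] A) (hskew : ∀ X Y, ω X Y = - ω Y X)
    (hclosed : ∀ X Y Z, dTwo (fun U V => ω U V) X Y Z = 0)
    (a : VecF A →ₗ[A] VecF A) (hcomm : ∀ X Y, ω (a X) Y = ω X (a Y))
    (hcloseda : ∀ X Y Z, dTwo (fun U V => ω (a U) V) X Y Z = 0)
    (p : (VecF A → A) → VecF A) (hp : ∀ X : VecF A, p (fun Y => ω X Y) = X) :
    (∀ X Y Z, dTwo (twist ω a) X Y Z = ω (nijenhuis a X Y) Z)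
      ∧ ∀ X Y, nijenhuis a X Y = p (fun Z => dTwo (twist ω a) X Y Z) := by
  have main : ∀ X Y Z, dTwo (twist ω a) X Y Z = ω (nijenhuis a X Y) Z := by
    intro X Y Z
    have h1 := hclosed X Y Z
    have h2 := hclosed (a X) (a Y) Z
    have h3 := hcloseda X (a Y) Z
    have h4 := hcloseda Y (a X) Z
    have h5 := hcloseda Z (a X) Y
    have h6 := hcloseda Z Y (a X)
    have d1 := congrArg (⇑X) (hcomm (a Y) Z)
    have d2 := congrArg (⇑Y) (hcomm (a X) Z)
    have d3 := congrArg (⇑Z) (hcomm (a X) Y)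
    simp only [dTwo, twist, nijenhuis, map_add, map_sub, map_neg,
      LinearMap.add_apply, LinearMap.sub_apply, LinearMap.neg_apply]
      at h1 h2 h3 h4 h5 h6 ⊢
    linear_combination (-1 : A) * h1 + h2 - h3 + h4 - h5 - h6 + d1 - d2 + d3
      - hskew Z (a (a ⁅X, Y⁆)) + hcomm ⁅a X, Z⁆ Y + hcomm ⁅X, Y⁆ (a Z)
      - hcomm X ⁅a Y, Z⁆ + hskew (a X) ⁅a Y, Z⁆ - hcomm (a Z) ⁅X, Y⁆
      + hskew ⁅X, Y⁆ (a (a Z)) - hcomm Z (a ⁅X, Y⁆) - hskew X (a ⁅a Y, Z⁆)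
  refine ⟨main, fun X Y => ?_⟩
  have : (fun Z => dTwo (twist ω a) X Y Z) = fun Z => ω (nijenhuis a X Y) Z :=
    funext fun Z => main X Y Z
  rw [this, hp]
end
end

section
/- Let (M, ω) be a symplectic manifold and a an almost complex structure on M (a² = −Id) commuting with ω. Then the Nijenhuis torsion N_a vanishes if and only if the 2-form ω_a(X,Y) = ω(aX,Y) is closed. -/
noncomputable section

open Derivation

variable (A : Type*) [CommRing A] [Algebra ℝ A]

variable {A}

lemma half_cancel (t : A) (h : 2 * t = 0) : t = 0 := by
  have h2 : (2 : A) = algebraMap ℝ A 2 := (map_ofNat (algebraMap ℝ A) 2).symm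
  have : (algebraMap ℝ A (1/2)) * (2 * t) = t := by
    rw [h2, ← mul_assoc, ← map_mul]
    norm_num
  rw [h] at this
  simpa using this.symm

lemma nij_a_left (a : VecF A →ₗ[A] VecF A) (ha2 : ∀ X, a (a X) = -X) (X Y : VecF A) :
    nijenhuis a (a X) Y = - a (nijenhuis a X Y) := by
  simp only [nijenhuis, map_add, map_sub, ha2, neg_lie, lie_neg, map_neg, neg_neg]
  abel

lemma nij_a_right (a : VecF A →ₗ[A] VecF A) (ha2 : ∀ X, a (a X) = -X) (X Y : VecF A) :
    nijenhuis a X (a Y) = - a (nijenhuis a X Y) := by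
  simp only [nijenhuis, map_add, map_sub, ha2, neg_lie, lie_neg, map_neg, neg_neg]
  abel

lemma key_identity (ω : VecF A →ₗ[A] VecF A →ₗ[A] A)
    (hclosed : ∀ X Y Z, dTwo (fun U V => ω U V) X Y Z = 0)
    (a : VecF A →ₗ[A] VecF A) (ha2 : ∀ X, a (a X) = -X)
    (hcomm : ∀ X Y, ω (a X) Y = ω X (a Y)) (X Y Z : VecF A) :
    2 * dTwo (fun U V => ω (a U) V) X Y Z
      = ω (a (nijenhuis a X Y)) Z - ω (a (nijenhuis a X Z)) Y
        + ω (a (nijenhuis a Y Z)) X := by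
  have h1 := hclosed X (a Y) Z
  have h2 := hclosed (a X) Y Z
  have h3 := hclosed X Y (a Z)
  have h4 := hclosed (a X) (a Y) (a Z)
  simp only [dTwo, nijenhuis] at h1 h2 h3 h4 ⊢
  simp only [map_add, map_sub, map_neg, ha2, ← hcomm, neg_neg,
    LinearMap.add_apply, LinearMap.sub_apply, LinearMap.neg_apply] at h1 h2 h3 h4 ⊢
  linear_combination h1 + h2 + h3 + h4

/-- for a symplectic form `ω` and an almost complex structure `a`
commuting with `ω`, the torsion `N_a` vanishes iff `ω_a` is closed. -/
theorem nijenhuis_vanishes_iff_closed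
    (ω : VecF A →ₗ[A] VecF A →ₗ[A] A) (hskew : ∀ X Y, ω X Y = - ω Y X)
    (hclosed : ∀ X Y Z, dTwo (fun U V => ω U V) X Y Z = 0)
    (hnd : ∀ X : VecF A, (∀ Y, ω X Y = 0) → X = 0)
    (a : VecF A →ₗ[A] VecF A) (ha2 : ∀ X, a (a X) = -X)
    (hcomm : ∀ X Y, ω (a X) Y = ω X (a Y)) :
    (∀ X Y, nijenhuis a X Y = 0)
      ↔ ∀ X Y Z, dTwo (fun U V => ω (a U) V) X Y Z = 0 := by
  constructor
  · intro hN X Y Z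
    apply half_cancel
    rw [key_identity ω hclosed a ha2 hcomm X Y Z, hN, hN, hN]
    simp
  · intro hd X Y
    have hzero : a (nijenhuis a X Y) = 0 := by
      apply hnd
      intro Z
      apply half_cancel
      have k1 := key_identity ω hclosed a ha2 hcomm X Y Z
      have k2 := key_identity ω hclosed a ha2 hcomm (a X) (a Y) Z
      rw [hd] at k1 k2
      simp only [nij_a_left a ha2, nij_a_right a ha2, map_neg, ha2, neg_neg,
        LinearMap.neg_apply] at k2
      -- k2 : 0 = - ω (a N(X,Y)) Z - ω (N(X,Z)) (a Y)... handle with hcomm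
      have e1 : ω (nijenhuis a X Z) (a Y) = ω (a (nijenhuis a X Z)) Y := (hcomm _ _).symm
      have e2 : ω (nijenhuis a Y Z) (a X) = ω (a (nijenhuis a Y Z)) X := (hcomm _ _).symm
      linear_combination k2 - k1 - e1 + e2
    have h0 := ha2 (nijenhuis a X Y)
    rw [hzero, map_zero] at h0
    exact neg_eq_zero.mp h0.symm
end
end

section
/- Let J be an integrable almost complex structure on M (J² = −Id and N_J = 0). Then for any 2-form ω on M commuting with J (i.e. ω(JX,Y) = ω(X,JY)) and all vector fields X, Y, Z: 2·dω_J(X,Y,Z) = dω(JX,Y,Z) + dω(X,JY,Z) + dω(X,Y,JZ) + dω(JX,JY,JZ), where ω_J(X,Y) = ω(JX,Y). -/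
noncomputable section

open Derivation

variable (A : Type*) [CommRing A] [Algebra ℝ A]

variable {A}

/-- for an integrable complex structure `J` and a 2-form `ω`
commuting with `J`:
`2 dω_J(X,Y,Z) = dω(JX,Y,Z) + dω(X,JY,Z) + dω(X,Y,JZ) + dω(JX,JY,JZ)`. -/
theorem two_dTwo_omegaJ
    (J : VecF A →ₗ[A] VecF A) (hJ2 : ∀ X, J (J X) = -X)
    (hNJ : ∀ X Y, nijenhuis J X Y = 0)
    (ω : VecF A →ₗ[A] VecF A →ₗ[A] A) (hskew : ∀ X Y, ω X Y = - ω Y X)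
    (hcomm : ∀ X Y, ω (J X) Y = ω X (J Y)) :
    ∀ X Y Z : VecF A,
      2 * dTwo (fun U V => ω (J U) V) X Y Z
        = dTwo (fun U V => ω U V) (J X) Y Z
          + dTwo (fun U V => ω U V) X (J Y) Z
          + dTwo (fun U V => ω U V) X Y (J Z)
          + dTwo (fun U V => ω U V) (J X) (J Y) (J Z) := by
  intro X Y Z
  have hB : ∀ U V : VecF A, ⁅J U, J V⁆ = J ⁅J U, V⁆ + J ⁅U, J V⁆ + ⁅U, V⁆ := by
    intro U V
    have h := hNJ U V
    rw [nijenhuis, hJ2] at h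
    have h2 : ⁅J U, J V⁆ - (J ⁅J U, V⁆ + J ⁅U, J V⁆ + ⁅U, V⁆) = 0 := by
      rw [← h]; abel
    exact sub_eq_zero.mp h2
  have h1 : ∀ U V : VecF A, ω U (J V) = ω (J U) V := fun U V => (hcomm U V).symm
  simp only [dTwo, hB, map_add, h1, hJ2, map_neg, LinearMap.add_apply,
    LinearMap.neg_apply, map_sub, LinearMap.sub_apply]
  ring
end
end

section
/- Let ω be a symplectic form on M with associated nondegenerate bivector π (π♯ = (ω♯)⁻¹), and let a : TM → TM be a bundle map. Then the pair of conditions (a∘π♯ = π♯∘a* and a*([ξ,η]_π) = L_{π♯ξ}(a*η) − L_{π♯η}(a*ξ) − d(π(a*ξ, η)) for all 1-forms ξ, η) holds if and only if (ω and a commute, i.e. ω(aX,Y)=ω(X,aY), and the 2-form ω_a(X,Y) = ω(aX,Y) is closed). -/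
noncomputable section

open Derivation

variable (A : Type*) [CommRing A] [Algebra ℝ A]

variable {A}

/-- condition (C2) for `(π, a)` (with `π` the inverse of the
symplectic form `ω`) holds iff `ω` and `a` commute and `ω_a` is closed.
Here `a*ξ = ξ ∘ₗ a`, `π(ξ,η) = η(π♯ξ)` and `[ξ,η]_π(Z) =
L_{π♯ξ}η(Z) − L_{π♯η}ξ(Z) − d(π(ξ,η))(Z)`. -/
theorem C2_iff_commute_and_closed
    (ω : VecF A →ₗ[A] VecF A →ₗ[A] A) (hskew : ∀ X Y, ω X Y = - ω Y X)
    (hclosed : ∀ X Y Z, dTwo (fun U V => ω U V) X Y Z = 0)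
    (p : OneForm A →ₗ[A] VecF A)
    (hp1 : ∀ X : VecF A, p (ω X) = X) (hp2 : ∀ ξ : OneForm A, ω (p ξ) = ξ)
    (a : VecF A →ₗ[A] VecF A) :
    ((∀ ξ : OneForm A, a (p ξ) = p (ξ ∘ₗ a)) ∧
      (∀ (ξ η : OneForm A) (Z : VecF A),
        lieOneForm (p ξ) η (a Z) - lieOneForm (p η) ξ (a Z) - dFun (η (p ξ)) (a Z)
          = lieOneForm (p ξ) (η ∘ₗ a) Z - lieOneForm (p η) (ξ ∘ₗ a) Z
              - dFun (η (p (ξ ∘ₗ a))) Z))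
      ↔ ((∀ X Y, ω (a X) Y = ω X (a Y)) ∧
          ∀ X Y Z, dTwo (fun U V => ω (a U) V) X Y Z = 0) := by
  have key : (∀ X Y, ω (a X) Y = ω X (a Y)) → ∀ X Y Z : VecF A,
      (lieOneForm (p (ω X)) (ω Y)) (a Z) - (lieOneForm (p (ω Y)) (ω X)) (a Z)
          - (dFun ((ω Y) (p (ω X)))) (a Z)
        - ((lieOneForm (p (ω X)) ((ω Y) ∘ₗ a)) Z - (lieOneForm (p (ω Y)) ((ω X) ∘ₗ a)) Z
            - (dFun ((ω Y) (p ((ω X) ∘ₗ a)))) Z)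
      = - dTwo (fun U V => ω (a U) V) X Y Z := by
    intro hc X Y Z
    have haω : ∀ X, (ω X) ∘ₗ a = ω (a X) := by
      intro X; ext Y; exact (hc X Y).symm
    have skew2 : ∀ U V : VecF A, ω U (a V) = - ω V (a U) := by
      intro U V; rw [← hc, hskew]
    have hcl := hclosed X Y (a Z)
    simp only [dTwo] at hcl
    simp only [haω, hp1, lieOneForm, dFun, dTwo, LinearMap.coe_mk, AddHom.coe_mk]
    simp only [hskew ⁅X, a Z⁆ Y, hskew ⁅Y, a Z⁆ X, hskew Y X, skew2 Y X,
      hc Y Z, hc X Z, hc X Y, hc Y ⁅X, Z⁆, hc X ⁅Y, Z⁆, hc ⁅X, Y⁆ Z,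
      hc ⁅X, Z⁆ Y, hc ⁅Y, Z⁆ X, skew2 ⁅X, Z⁆ Y, skew2 ⁅Y, Z⁆ X, map_neg] at hcl ⊢
    linear_combination hcl
  constructor
  · rintro ⟨h1, h2⟩
    have hc : ∀ X Y, ω (a X) Y = ω X (a Y) := by
      intro X Y
      have h := h1 (ω X)
      rw [hp1] at h
      rw [h, hp2]
      rfl
    refine ⟨hc, ?_⟩
    intro X Y Z
    have h := h2 (ω X) (ω Y) Z
    linear_combination key hc X Y Z - h
  · rintro ⟨hc, hcl2⟩
    constructor
    · intro ξ
      have hξ : ω (a (p ξ)) = ξ ∘ₗ a := by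
        ext Y
        rw [hc, hp2]
        rfl
      rw [← hp1 (a (p ξ)), hξ]
    · intro ξ η Z
      rw [← hp2 ξ, ← hp2 η]
      have h := key hc (p ξ) (p η) Z
      rw [hcl2 (p ξ) (p η) Z] at h
      linear_combination h
end
end

section
/- Let (ω, a) be a Hitchin pair on M (ω symplectic, a commuting with ω, and ω_a closed) with twist σ = −(ω + a*ω). Then for all vector fields X, Y, Z: dσ_a(X,Y,Z) = dσ(aX,Y,Z) + dσ(X,aY,Z) + dσ(X,Y,aZ), where σ_a(X,Y) = σ(aX,Y). -/
noncomputable section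

open Derivation

variable (A : Type*) [CommRing A] [Algebra ℝ A]

variable {A}

/-- for a Hitchin pair `(ω, a)` with twist `σ`,
`dσ_a(X,Y,Z) = dσ(aX,Y,Z) + dσ(X,aY,Z) + dσ(X,Y,aZ)`. -/
theorem dTwo_twist_a
    (ω : VecF A →ₗ[A] VecF A →ₗ[A] A) (hskew : ∀ X Y, ω X Y = - ω Y X)
    (hclosed : ∀ X Y Z, dTwo (fun U V => ω U V) X Y Z = 0)
    (hnd : ∀ X : VecF A, (∀ Y, ω X Y = 0) → X = 0)
    (a : VecF A →ₗ[A] VecF A) (hcomm : ∀ X Y, ω (a X) Y = ω X (a Y))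
    (hcloseda : ∀ X Y Z, dTwo (fun U V => ω (a U) V) X Y Z = 0) :
    ∀ X Y Z : VecF A,
      dTwo (fun U V => twist ω a (a U) V) X Y Z
        = dTwo (twist ω a) (a X) Y Z + dTwo (twist ω a) X (a Y) Z
            + dTwo (twist ω a) X Y (a Z) := by
  intro X Y Z
  have h0 := hclosed (a X) (a Y) (a Z)
  have h4 := hclosed (a X) Y Z
  have h5 := hclosed X (a Y) Z
  have h6 := hclosed X Y (a Z)
  have h1 := hcloseda (a X) (a Y) Z
  have h2 := hcloseda (a X) Y (a Z)
  have h3 := hcloseda X (a Y) (a Z)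
  have h7 := hcloseda X Y Z
  simp only [dTwo, twist, map_add, map_neg, map_sub] at *
  simp only [← hcomm] at *
  linear_combination (-h7) + h4 + h5 + h6 + h1 + h2 + h3 - h0
end
end

section
/- Let f : M₁ → M₂ be a smooth map between manifolds equipped with generalized complex data (πᵢ, aᵢ, σᵢ) satisfying conditions (C3): aᵢ² + πᵢ♯σᵢ♯ = −Id and N_{aᵢ}(X,Y) = πᵢ♯ i_{X∧Y}(dσᵢ). Suppose f*σ₂ = σ₁ and df∘a₁ = a₂∘df. If x ∈ M₂ is a regular value of f, then on the fiber C = f⁻¹(x), the restriction of a₁ to TC = ker(df) satisfies a₁² = −Id on TC and N_{a₁}(X,Y) = 0 for X, Y tangent to C; i.e. a₁ restricts to an integrable complex structure on C. -/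
noncomputable section

open Derivation

variable (A : Type*) [CommRing A] [Algebra ℝ A]

variable {A}

/-- fibers of a generalized holomorphic map are complex.
The differential of the map `f : M₁ → M₂` is modelled by an `A`-linear map
`F : X(M₁) → W` (with `W` modelling sections of `f*TM₂`), `a₂` models the
`(1,1)`-tensor of the target (`F ∘ a = a₂ ∘ F`), the vertical fields
`ker F` are closed under the bracket, and `σ = f*σ₂` is modelled by
`σ(X,Y) = B(FX, FY)`. Condition (C3) holds for `(π, a, σ)` with `π♯ = p`.
Then `a` restricts to `ker F` with `a² = −Id` and vanishing Nijenhuis torsion. -/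
theorem fiber_complex
    (a : VecF A →ₗ[A] VecF A)
    (σ : VecF A →ₗ[A] VecF A →ₗ[A] A) (hσ : ∀ X Y, σ X Y = - σ Y X)
    (p : (VecF A → A) → VecF A) (hp0 : p (fun _ => (0 : A)) = 0)
    (hC3a : ∀ X : VecF A, a (a X) + p (fun Y => σ X Y) = -X)
    (hC3b : ∀ X Y : VecF A,
      nijenhuis a X Y = p (fun Z => dTwo (fun U V => σ U V) X Y Z))
    (W : Type*) [AddCommGroup W] [Module A W]
    (F : VecF A →ₗ[A] W) (a₂ : W →ₗ[A] W)
    (hrel : ∀ X, F (a X) = a₂ (F X))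
    (hbr : ∀ X Y : VecF A, F X = 0 → F Y = 0 → F ⁅X, Y⁆ = 0)
    (B : W →ₗ[A] W →ₗ[A] A) (hpull : ∀ X Y, σ X Y = B (F X) (F Y)) :
    (∀ X : VecF A, F X = 0 → F (a X) = 0 ∧ a (a X) = -X)
      ∧ ∀ X Y : VecF A, F X = 0 → F Y = 0 → nijenhuis a X Y = 0 := by
  have hz : ∀ X Y : VecF A, F X = 0 → σ X Y = 0 := by
    intro X Y hX
    rw [hpull, hX]; simp
  refine ⟨fun X hX => ?_, fun X Y hX hY => ?_⟩
  · constructor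
    · rw [hrel, hX, map_zero]
    · have h := hC3a X
      have : (fun Y => σ X Y) = fun _ => (0 : A) := funext fun Y => hz X Y hX
      rw [this, hp0, add_zero] at h
      exact h
  · rw [hC3b]
    have : (fun Z => dTwo (fun U V => σ U V) X Y Z) = fun _ => (0 : A) := by
      funext Z
      have haX : σ X Z = 0 := hz X Z hX
      have hbXY : F ⁅X, Y⁆ = 0 := hbr X Y hX hY
      simp only [dTwo, hz X Y hX, hz Y Z hY, hz X Z hX, hz _ _ hbXY,
        hσ ⁅X, Z⁆ Y, hz Y ⁅X, Z⁆ hY, hσ ⁅Y, Z⁆ X, hz X ⁅Y, Z⁆ hX]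
      simp [hz X Y hX]
    rw [this, hp0]
end
end
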